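/- In the simplex category Δ, for 0 ≤ i < j ≤ n-1, the commutative square formed by the degeneracy maps σ_i : [n] → [n-1], σ_j : [n] → [n-1], σ_{j-1} : [n-1] → [n-2], σ_i : [n-1] → [n-2] (i.e., σ_{j-1} ∘ σ_i = σ_i ∘ σ_j as maps [n] → [n-2]) is an absolute pushout square in Δ. -/

import Mathlib

open CategoryTheory SimplexCategory

open CategoryTheory.Limits in
/-- In the simplex category, the commutative square of degeneracy maps
`σ_j ∘ σ_{castSucc i} = σ_i ∘ σ_{succ j}` (for `i ≤ j`, i.e. for a strict pair
`castSucc i < succ j` of degeneracies out of `[n+2]`) is an absolute pushout: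
every functor out of the simplex category sends it to a pushout square. -/
theorem stmt3 (n : ℕ) (i j : Fin (n + 1)) (h : i ≤ j)
    {D : Type*} [Category D] (F : SimplexCategory ⥤ D) :
    IsPushout (F.map (σ (Fin.castSucc i))) (F.map (σ j.succ))
      (F.map (σ j)) (F.map (σ i)) := by
  -- sections
  set t : SimplexCategory.mk n ⟶ SimplexCategory.mk (n+1) := δ i.castSucc with ht
  set s : SimplexCategory.mk (n+1) ⟶ SimplexCategory.mk (n+2) := δ (Fin.castSucc i).castSucc with hs
  set d : SimplexCategory.mk (n+1) ⟶ SimplexCategory.mk (n+2) := δ j.succ.succ with hd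
  have hA : t ≫ σ i = 𝟙 _ := δ_comp_σ_self
  have hB : s ≫ σ (Fin.castSucc i) = 𝟙 _ := δ_comp_σ_self
  have hC : s ≫ σ j.succ = σ j ≫ t :=
    δ_comp_σ_of_le (by exact Fin.castSucc_le_castSucc_iff.mpr h)
  have hD : d ≫ σ j.succ = 𝟙 _ := δ_comp_σ_succ
  have hgt : d ≫ σ (Fin.castSucc i) = σ i ≫ δ j.succ :=
    δ_comp_σ_of_gt (by
      exact lt_of_le_of_lt (Fin.castSucc_le_castSucc_iff.mpr h) Fin.castSucc_lt_succ)
  have hE : σ i ≫ t ≫ d ≫ σ (Fin.castSucc i) = d ≫ σ (Fin.castSucc i) := by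
    rw [hgt, ← Category.assoc, ← Category.assoc, Category.assoc (σ i) t (σ i), hA,
      Category.comp_id]
  have comm : F.map (σ (Fin.castSucc i)) ≫ F.map (σ j) =
      F.map (σ j.succ) ≫ F.map (σ i) := by
    rw [← F.map_comp, ← F.map_comp, σ_comp_σ h]
  refine IsPushout.of_isColimit' ⟨comm⟩ (PushoutCocone.IsColimit.mk _
    (fun c => F.map t ≫ c.inr) (fun c => ?_) (fun c => ?_) (fun c m hl hr => ?_)
    )
  · -- inl : F.map (σ j) ≫ (F.map t ≫ c.inr) = c.inl
    have : F.map (σ j) ≫ F.map t = F.map s ≫ F.map (σ j.succ) := by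
      rw [← F.map_comp, ← F.map_comp, hC]
    rw [← Category.assoc, this, Category.assoc, c.condition.symm, ← Category.assoc,
      ← F.map_comp, hB, F.map_id, Category.id_comp]
  · -- inr : F.map (σ i) ≫ (F.map t ≫ c.inr) = c.inr
    have e1 : F.map (σ i) ≫ F.map t =
        (F.map (σ i) ≫ F.map t ≫ F.map d) ≫ F.map (σ j.succ) := by
      simp only [← F.map_comp, Category.assoc, hD, Category.comp_id]
    have e2 : (F.map (σ i) ≫ F.map t ≫ F.map d) ≫ F.map (σ (Fin.castSucc i)) =
        F.map d ≫ F.map (σ (Fin.castSucc i)) := by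
      simpa only [← F.map_comp, Category.assoc] using congrArg F.map hE
    calc F.map (σ i) ≫ F.map t ≫ c.inr
        = ((F.map (σ i) ≫ F.map t ≫ F.map d) ≫ F.map (σ j.succ)) ≫ c.inr := by
          rw [← e1, Category.assoc]
      _ = (F.map (σ i) ≫ F.map t ≫ F.map d) ≫ F.map (σ (Fin.castSucc i)) ≫ c.inl := by
          rw [Category.assoc, c.condition]
      _ = F.map d ≫ F.map (σ (Fin.castSucc i)) ≫ c.inl := by
          rw [← Category.assoc, e2, Category.assoc]
      _ = F.map d ≫ F.map (σ j.succ) ≫ c.inr := by rw [c.condition]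
      _ = c.inr := by rw [← Category.assoc, ← F.map_comp, hD, F.map_id, Category.id_comp]
  · -- uniqueness
    show m = F.map t ≫ c.inr
    have : F.map t ≫ F.map (σ i) = 𝟙 _ := by rw [← F.map_comp, hA, F.map_id]
    rw [← hr, ← Category.assoc, this, Category.id_comp]
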